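/- For every w ∈ ℝ^d, ‖∇l_T(w) − G(w)‖ ≤ ((1 + αL)^N − 1) ‖∇l_T(w)‖ + (1 + αL)^N ((1 + αL)^N − 1) ‖∇l_S(w)‖. -/

import Mathlib

set_option maxHeartbeats 1000000
set_option synthInstance.maxHeartbeats 400000

open MeasureTheory

noncomputable def innerPath {d : ℕ} (α : ℝ) (l : EuclideanSpace ℝ (Fin d) → ℝ) :
    ℕ → EuclideanSpace ℝ (Fin d) → EuclideanSpace ℝ (Fin d)
  | 0, w => w
  | j + 1, w => innerPath α l j w - α • gradient l (innerPath α l j w)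

noncomputable def hessProd {d : ℕ} (α : ℝ) (N : ℕ)
    (lS : EuclideanSpace ℝ (Fin d) → ℝ) (w : EuclideanSpace ℝ (Fin d)) :
    EuclideanSpace ℝ (Fin d) →L[ℝ] EuclideanSpace ℝ (Fin d) :=
  ((List.range N).map fun j =>
    ContinuousLinearMap.id ℝ (EuclideanSpace ℝ (Fin d)) -
      α • fderiv ℝ (gradient lS) (innerPath α lS j w)).prod

noncomputable def metaGrad {d : ℕ} (α : ℝ) (N : ℕ)
    (lS lT : EuclideanSpace ℝ (Fin d) → ℝ) (w : EuclideanSpace ℝ (Fin d)) :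
    EuclideanSpace ℝ (Fin d) :=
  hessProd α N lS w (gradient lT (innerPath α lS N w))

section Aux

variable {d : ℕ} {α L : ℝ} {lS : EuclideanSpace ℝ (Fin d) → ℝ}

lemma fderiv_grad_le (hL : 0 ≤ L)
    (hgradS : ∀ w u, ‖gradient lS w - gradient lS u‖ ≤ L * ‖w - u‖)
    (x : EuclideanSpace ℝ (Fin d)) : ‖fderiv ℝ (gradient lS) x‖ ≤ L := by
  have hlip : LipschitzWith L.toNNReal (gradient lS) := by
    apply LipschitzWith.of_dist_le_mul
    intro w u
    simpa [dist_eq_norm, Real.coe_toNNReal _ hL] using hgradS w u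
  exact (norm_fderiv_le_of_lipschitz ℝ hlip (x₀ := x)).trans_eq (Real.coe_toNNReal _ hL)

lemma factor_norm_le (hα : 0 ≤ α) (hL : 0 ≤ L)
    (hgradS : ∀ w u, ‖gradient lS w - gradient lS u‖ ≤ L * ‖w - u‖)
    (x : EuclideanSpace ℝ (Fin d)) :
    ‖ContinuousLinearMap.id ℝ (EuclideanSpace ℝ (Fin d)) -
      α • fderiv ℝ (gradient lS) x‖ ≤ 1 + α * L := by
  calc ‖ContinuousLinearMap.id ℝ (EuclideanSpace ℝ (Fin d)) -
        α • fderiv ℝ (gradient lS) x‖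
      ≤ ‖ContinuousLinearMap.id ℝ (EuclideanSpace ℝ (Fin d))‖ +
        ‖α • fderiv ℝ (gradient lS) x‖ := norm_sub_le _ _
    _ ≤ 1 + α * L := by
        refine add_le_add ContinuousLinearMap.norm_id_le ?_
        rw [norm_smul, Real.norm_eq_abs, abs_of_nonneg hα]
        exact mul_le_mul_of_nonneg_left (fderiv_grad_le hL hgradS x) hα

lemma factor_sub_one_norm_le (hα : 0 ≤ α) (hL : 0 ≤ L)
    (hgradS : ∀ w u, ‖gradient lS w - gradient lS u‖ ≤ L * ‖w - u‖)
    (x : EuclideanSpace ℝ (Fin d)) :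
    ‖(ContinuousLinearMap.id ℝ (EuclideanSpace ℝ (Fin d)) -
      α • fderiv ℝ (gradient lS) x) - 1‖ ≤ α * L := by
  have : (ContinuousLinearMap.id ℝ (EuclideanSpace ℝ (Fin d)) -
      α • fderiv ℝ (gradient lS) x) - 1 = -(α • fderiv ℝ (gradient lS) x) := by
    rw [ContinuousLinearMap.one_def]; abel
  calc ‖(ContinuousLinearMap.id ℝ (EuclideanSpace ℝ (Fin d)) -
        α • fderiv ℝ (gradient lS) x) - 1‖
      = ‖α • fderiv ℝ (gradient lS) x‖ := by rw [this, norm_neg]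
    _ ≤ ‖α‖ * ‖fderiv ℝ (gradient lS) x‖ := (norm_smul α _).le
    _ ≤ α * L := by
        rw [Real.norm_eq_abs, abs_of_nonneg hα]
        exact mul_le_mul_of_nonneg_left (fderiv_grad_le hL hgradS x) hα

lemma hessProd_succ (N : ℕ) (w : EuclideanSpace ℝ (Fin d)) :
    hessProd α (N + 1) lS w = hessProd α N lS w *
      (ContinuousLinearMap.id ℝ (EuclideanSpace ℝ (Fin d)) -
        α • fderiv ℝ (gradient lS) (innerPath α lS N w)) := by
  unfold hessProd
  rw [List.range_succ, List.map_append, List.prod_append]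
  simp

lemma hessProd_zero (w : EuclideanSpace ℝ (Fin d)) :
    hessProd α 0 lS w = 1 := by
  simp [hessProd]

lemma hessProd_norm_le (hα : 0 ≤ α) (hL : 0 ≤ L)
    (hgradS : ∀ w u, ‖gradient lS w - gradient lS u‖ ≤ L * ‖w - u‖)
    (N : ℕ) (w : EuclideanSpace ℝ (Fin d)) :
    ‖hessProd α N lS w‖ ≤ (1 + α * L) ^ N := by
  induction N with
  | zero => rw [hessProd_zero, pow_zero]; exact ContinuousLinearMap.norm_id_le
  | succ n ih =>
      rw [hessProd_succ, pow_succ]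
      calc ‖hessProd α n lS w * _‖ ≤ ‖hessProd α n lS w‖ * _ := norm_mul_le _ _
        _ ≤ (1 + α * L) ^ n * (1 + α * L) :=
          mul_le_mul ih (factor_norm_le hα hL hgradS _) (norm_nonneg _)
            (pow_nonneg (by positivity) _)

lemma hessProd_sub_one_norm_le (hα : 0 ≤ α) (hL : 0 ≤ L)
    (hgradS : ∀ w u, ‖gradient lS w - gradient lS u‖ ≤ L * ‖w - u‖)
    (N : ℕ) (w : EuclideanSpace ℝ (Fin d)) :
    ‖hessProd α N lS w - 1‖ ≤ (1 + α * L) ^ N - 1 := by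
  induction N with
  | zero => simp [hessProd_zero]
  | succ n ih =>
      set A := ContinuousLinearMap.id ℝ (EuclideanSpace ℝ (Fin d)) -
        α • fderiv ℝ (gradient lS) (innerPath α lS n w) with hA
      have e1 : hessProd α (n + 1) lS w = hessProd α n lS w * A :=
        hessProd_succ n w
      have e2 : hessProd α n lS w * (A - 1) =
          hessProd α n lS w * A - hessProd α n lS w := by
        rw [mul_sub, mul_one]
      have key : hessProd α (n + 1) lS w - 1 =
          hessProd α n lS w * (A - 1) + (hessProd α n lS w - 1) := by
        rw [e1, e2]; abel
      rw [key]
      calc ‖hessProd α n lS w * (A - 1) + (hessProd α n lS w - 1)‖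
          ≤ ‖hessProd α n lS w * (A - 1)‖ + ‖hessProd α n lS w - 1‖ := norm_add_le _ _
        _ ≤ ‖hessProd α n lS w‖ * ‖A - 1‖ + ((1 + α * L) ^ n - 1) :=
            add_le_add (norm_mul_le _ _) ih
        _ ≤ (1 + α * L) ^ n * (α * L) + ((1 + α * L) ^ n - 1) := by
            refine add_le_add ?_ le_rfl
            exact mul_le_mul (hessProd_norm_le hα hL hgradS n w)
              (factor_sub_one_norm_le hα hL hgradS _) (norm_nonneg _)
              (pow_nonneg (by positivity) _)
        _ = (1 + α * L) ^ (n + 1) - 1 := by rw [pow_succ]; ring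

lemma grad_innerPath_le (hα : 0 ≤ α) (hL : 0 ≤ L)
    (hgradS : ∀ w u, ‖gradient lS w - gradient lS u‖ ≤ L * ‖w - u‖)
    (j : ℕ) (w : EuclideanSpace ℝ (Fin d)) :
    ‖gradient lS (innerPath α lS j w)‖ ≤ (1 + α * L) ^ j * ‖gradient lS w‖ := by
  induction j with
  | zero => simp [innerPath]
  | succ n ih =>
      have hstep : innerPath α lS (n + 1) w - innerPath α lS n w =
          -(α • gradient lS (innerPath α lS n w)) := by
        show innerPath α lS n w - α • gradient lS (innerPath α lS n w)
            - innerPath α lS n w = _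
        abel
      calc ‖gradient lS (innerPath α lS (n + 1) w)‖
          ≤ ‖gradient lS (innerPath α lS (n + 1) w) - gradient lS (innerPath α lS n w)‖
            + ‖gradient lS (innerPath α lS n w)‖ := by
              simpa using norm_add_le (gradient lS (innerPath α lS (n + 1) w)
                - gradient lS (innerPath α lS n w)) (gradient lS (innerPath α lS n w))
        _ ≤ L * ‖innerPath α lS (n + 1) w - innerPath α lS n w‖
            + ‖gradient lS (innerPath α lS n w)‖ :=
            add_le_add (hgradS _ _) le_rfl
        _ = (1 + α * L) * ‖gradient lS (innerPath α lS n w)‖ := by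
            rw [hstep, norm_neg, norm_smul, Real.norm_eq_abs, abs_of_nonneg hα]; ring
        _ ≤ (1 + α * L) * ((1 + α * L) ^ n * ‖gradient lS w‖) :=
            mul_le_mul_of_nonneg_left ih (by positivity)
        _ = (1 + α * L) ^ (n + 1) * ‖gradient lS w‖ := by ring

lemma innerPath_dist_le (hα : 0 ≤ α) (hL : 0 ≤ L)
    (hgradS : ∀ w u, ‖gradient lS w - gradient lS u‖ ≤ L * ‖w - u‖)
    (N : ℕ) (w : EuclideanSpace ℝ (Fin d)) :
    L * ‖w - innerPath α lS N w‖ ≤ ((1 + α * L) ^ N - 1) * ‖gradient lS w‖ := by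
  induction N with
  | zero => simp [innerPath]
  | succ n ih =>
      have hstep : innerPath α lS n w - innerPath α lS (n + 1) w =
          α • gradient lS (innerPath α lS n w) := by
        show innerPath α lS n w -
          (innerPath α lS n w - α • gradient lS (innerPath α lS n w)) = _
        abel
      have h1 : ‖w - innerPath α lS (n + 1) w‖ ≤
          ‖w - innerPath α lS n w‖ + α * ‖gradient lS (innerPath α lS n w)‖ := by
        calc ‖w - innerPath α lS (n + 1) w‖
            ≤ ‖w - innerPath α lS n w‖
              + ‖innerPath α lS n w - innerPath α lS (n + 1) w‖ := by
              simpa using norm_sub_le_norm_sub_add_norm_sub w (innerPath α lS n w) _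
          _ = ‖w - innerPath α lS n w‖ + α * ‖gradient lS (innerPath α lS n w)‖ := by
              rw [hstep, norm_smul, Real.norm_eq_abs, abs_of_nonneg hα]
      calc L * ‖w - innerPath α lS (n + 1) w‖
          ≤ L * ‖w - innerPath α lS n w‖
            + L * (α * ‖gradient lS (innerPath α lS n w)‖) := by
            rw [← mul_add]; exact mul_le_mul_of_nonneg_left h1 hL
        _ ≤ ((1 + α * L) ^ n - 1) * ‖gradient lS w‖
            + L * (α * ((1 + α * L) ^ n * ‖gradient lS w‖)) := by
            refine add_le_add ih ?_
            refine mul_le_mul_of_nonneg_left ?_ hL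
            exact mul_le_mul_of_nonneg_left (grad_innerPath_le hα hL hgradS n w) hα
        _ = ((1 + α * L) ^ (n + 1) - 1) * ‖gradient lS w‖ := by rw [pow_succ]; ring

end Aux

theorem stmt12 {d : ℕ} (hd : 1 ≤ d) (α L : ℝ) (hα : 0 < α) (hL : 0 < L)
    (N : ℕ) (hN : 1 ≤ N)
    (lS lT : EuclideanSpace ℝ (Fin d) → ℝ) (hlS : ContDiff ℝ 2 lS) (hlT : ContDiff ℝ 2 lT)
    (hgradS : ∀ w u : EuclideanSpace ℝ (Fin d), ‖gradient lS w - gradient lS u‖ ≤ L * ‖w - u‖)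
    (hgradT : ∀ w u : EuclideanSpace ℝ (Fin d), ‖gradient lT w - gradient lT u‖ ≤ L * ‖w - u‖) :
    ∀ w : EuclideanSpace ℝ (Fin d),
      ‖gradient lT w - metaGrad α N lS lT w‖ ≤
        ((1 + α * L) ^ N - 1) * ‖gradient lT w‖ +
          (1 + α * L) ^ N * ((1 + α * L) ^ N - 1) * ‖gradient lS w‖ := by
  intro w
  have hα' := hα.le
  have hL' := hL.le
  set P := hessProd α N lS w with hP
  set g := gradient lT w with hg
  set gN := gradient lT (innerPath α lS N w) with hgN
  have hdecomp : g - metaGrad α N lS lT w = (1 - P) g + P (g - gN) := by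
    simp only [metaGrad, ← hP, ← hgN, ContinuousLinearMap.sub_apply,
      ContinuousLinearMap.one_apply, map_sub]
    abel
  rw [hdecomp]
  have h1 : ‖(1 - P) g‖ ≤ ((1 + α * L) ^ N - 1) * ‖g‖ := by
    calc ‖(1 - P) g‖ ≤ ‖1 - P‖ * ‖g‖ := ContinuousLinearMap.le_opNorm _ _
      _ ≤ ((1 + α * L) ^ N - 1) * ‖g‖ := by
          refine mul_le_mul_of_nonneg_right ?_ (norm_nonneg _)
          rw [norm_sub_rev]
          exact hessProd_sub_one_norm_le hα' hL' hgradS N w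
  have h2 : ‖P (g - gN)‖ ≤ (1 + α * L) ^ N * ((1 + α * L) ^ N - 1) * ‖gradient lS w‖ := by
    calc ‖P (g - gN)‖ ≤ ‖P‖ * ‖g - gN‖ := ContinuousLinearMap.le_opNorm _ _
      _ ≤ (1 + α * L) ^ N * (L * ‖w - innerPath α lS N w‖) := by
          refine mul_le_mul (hessProd_norm_le hα' hL' hgradS N w) (hgradT _ _)
            (norm_nonneg _) (pow_nonneg (by positivity) _)
      _ ≤ (1 + α * L) ^ N * (((1 + α * L) ^ N - 1) * ‖gradient lS w‖) :=
          mul_le_mul_of_nonneg_left (innerPath_dist_le hα' hL' hgradS N w)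
            (pow_nonneg (by positivity) _)
      _ = (1 + α * L) ^ N * ((1 + α * L) ^ N - 1) * ‖gradient lS w‖ := by ring
  calc ‖(1 - P) g + P (g - gN)‖ ≤ ‖(1 - P) g‖ + ‖P (g - gN)‖ := norm_add_le _ _
    _ ≤ _ := add_le_add h1 h2
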